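/- Let γ ∈ [0,1), let (β_k) ⊆ (0,1) with β_k → 0 and ∑ β_k = ∞, and let (e_k) be absolutely summable. If a real sequence (u_k) satisfies u_{k+1} ≥ u_k(1 - (1-γ)β_k) + e_k for all k, then liminf_{k₁→∞} inf_{k₂≥k₁} ∑_{k=k₁}^{k₂} β_k u_k ≥ 0. -/

import Mathlib

set_option maxHeartbeats 1000000


open Finset Filter

theorem lemma_two_liminf_nonneg
    (γ : ℝ) (hγ : 0 ≤ γ ∧ γ < 1)
    (β : ℕ → ℝ) (hβ : ∀ k, 0 < β k ∧ β k < 1)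
    (hβ0 : Tendsto β atTop (nhds 0))
    (hβdiv : Tendsto (fun n => ∑ k ∈ range n, β k) atTop atTop)
    (e : ℕ → ℝ) (he : Summable fun k => |e k|)
    (u : ℕ → ℝ)
    (hrec : ∀ k, u (k + 1) ≥ u k * (1 - (1 - γ) * β k) + e k) :
    ∀ ε > (0 : ℝ), ∃ K : ℕ, ∀ k₁ ≥ K, ∀ k₂ ≥ k₁,
      (-ε : ℝ) ≤ ∑ k ∈ Icc k₁ k₂, β k * u k := by
  intro ε hε
  obtain ⟨hγ0, hγ1⟩ := hγ
  set c : ℝ := 1 - γ with hc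
  have hc0 : 0 < c := by simp only [hc]; linarith
  have hc1 : c ≤ 1 := by simp only [hc]; linarith
  set v : ℕ → ℝ := fun k => max (-(u k)) 0 with hvdef
  have hv0 : ∀ k, 0 ≤ v k := fun k => le_max_right _ _
  have hvu : ∀ k, -(v k) ≤ u k := by
    intro k
    have h := le_max_left (-(u k)) 0
    simp only [hvdef]
    linarith [le_max_left (-(u k)) 0]
  have hfac : ∀ k, 0 < 1 - c * β k := by
    intro k
    have h1 : c * β k ≤ β k := by nlinarith [(hβ k).1]
    linarith [(hβ k).2]
  -- the key one-step inequality for v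
  have hvrec : ∀ k, v (k + 1) ≤ (1 - c * β k) * v k + |e k| := by
    intro k
    have h := hrec k
    have hEk : -(e k) ≤ |e k| := neg_le_abs _
    have hnn : 0 ≤ (1 - c * β k) * v k + |e k| :=
      add_nonneg (mul_nonneg (hfac k).le (hv0 k)) (abs_nonneg _)
    rcases le_or_gt (-(u (k + 1))) 0 with h0 | h0
    · calc v (k + 1) = 0 := max_eq_right h0
        _ ≤ _ := hnn
    · have hve : v (k + 1) = -(u (k + 1)) := max_eq_left h0.le
      have hle : -(u k) ≤ v k := le_max_left _ _
      have hmul := mul_le_mul_of_nonneg_left hle (hfac k).le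
      rw [hve]
      nlinarith [hmul, h, hEk]
  -- termwise: c * (β k * v k) ≤ v k - v (k+1) + |e k|
  have hterm : ∀ k, c * (β k * v k) ≤ (v k - v (k + 1)) + |e k| := by
    intro k
    have h := hvrec k
    ring_nf at h ⊢
    linarith
  -- summability of shifted |e|
  have hshift : ∀ N : ℕ, Summable fun k => |e (k + N)| :=
    fun N => (summable_nat_add_iff N).mpr he
  have hrangeTail : ∀ N m : ℕ, ∑ j ∈ range m, |e (N + j)| ≤ ∑' k, |e (k + N)| := by
    intro N m
    calc ∑ j ∈ range m, |e (N + j)| = ∑ j ∈ range m, |e (j + N)| :=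
          Finset.sum_congr rfl fun j _ => by rw [add_comm]
      _ ≤ _ := Summable.sum_le_tsum _ (fun i _ => abs_nonneg _) (hshift N)
  -- aggregate inequality over an interval
  have key : ∀ k₁ k₂ : ℕ, k₁ ≤ k₂ →
      c * ∑ k ∈ Icc k₁ k₂, β k * v k ≤ v k₁ + ∑' k, |e (k + k₁)| := by
    intro k₁ k₂ h12
    have htel : ∑ k ∈ Icc k₁ k₂, (v k - v (k + 1)) = v k₁ - v (k₂ + 1) := by
      rw [← Finset.Ico_add_one_right_eq_Icc, Finset.sum_Ico_eq_sub _ (by omega : k₁ ≤ k₂ + 1),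
        Finset.sum_range_sub' v, Finset.sum_range_sub' v]
      ring
    have hIccTail : ∑ k ∈ Icc k₁ k₂, |e k| ≤ ∑' k, |e (k + k₁)| := by
      rw [← Finset.Ico_add_one_right_eq_Icc, Finset.sum_Ico_eq_sum_range]
      exact hrangeTail k₁ _
    calc c * ∑ k ∈ Icc k₁ k₂, β k * v k
        = ∑ k ∈ Icc k₁ k₂, c * (β k * v k) := by rw [Finset.mul_sum]
      _ ≤ ∑ k ∈ Icc k₁ k₂, ((v k - v (k + 1)) + |e k|) :=
          Finset.sum_le_sum fun k _ => hterm k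
      _ = (∑ k ∈ Icc k₁ k₂, (v k - v (k + 1))) + ∑ k ∈ Icc k₁ k₂, |e k| :=
          Finset.sum_add_distrib
      _ = (v k₁ - v (k₂ + 1)) + ∑ k ∈ Icc k₁ k₂, |e k| := by rw [htel]
      _ ≤ v k₁ + ∑' k, |e (k + k₁)| := by
          have := hv0 (k₂ + 1)
          linarith [hIccTail]
  -- v (N + k) bounded by product + tail
  have hvN : ∀ N k : ℕ, v (N + k) ≤
      v N * ∏ j ∈ range k, (1 - c * β (N + j)) + ∑ j ∈ range k, |e (N + j)| := by
    intro N k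
    induction k with
    | zero => simp
    | succ k ih =>
      have hP0 : 0 ≤ ∏ j ∈ range k, (1 - c * β (N + j)) :=
        Finset.prod_nonneg fun j _ => (hfac _).le
      have hS0 : 0 ≤ ∑ j ∈ range k, |e (N + j)| :=
        Finset.sum_nonneg fun j _ => abs_nonneg _
      have hfk := hfac (N + k)
      have haS : 0 ≤ c * β (N + k) * ∑ j ∈ range k, |e (N + j)| :=
        mul_nonneg (mul_nonneg hc0.le (hβ (N + k)).1.le) hS0
      rw [Finset.prod_range_succ, Finset.sum_range_succ]
      calc v (N + (k + 1)) = v ((N + k) + 1) := rfl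
        _ ≤ (1 - c * β (N + k)) * v (N + k) + |e (N + k)| := hvrec _
        _ ≤ (1 - c * β (N + k)) *
              (v N * ∏ j ∈ range k, (1 - c * β (N + j)) + ∑ j ∈ range k, |e (N + j)|)
            + |e (N + k)| :=
            add_le_add_left (mul_le_mul_of_nonneg_left ih hfk.le) _
        _ ≤ v N * ((∏ j ∈ range k, (1 - c * β (N + j))) * (1 - c * β (N + k)))
            + ((∑ j ∈ range k, |e (N + j)|) + |e (N + k)|) := by nlinarith [haS]
  -- the product tends to zero
  have hprod : ∀ N : ℕ,
      Tendsto (fun k => ∏ j ∈ range k, (1 - c * β (N + j))) atTop (nhds 0) := by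
    intro N
    have hub : ∀ k, ∏ j ∈ range k, (1 - c * β (N + j)) ≤
        Real.exp (-(c * ∑ j ∈ range k, β (N + j))) := by
      intro k
      calc ∏ j ∈ range k, (1 - c * β (N + j))
          ≤ ∏ j ∈ range k, Real.exp (-(c * β (N + j))) := by
            apply Finset.prod_le_prod (fun j _ => (hfac _).le)
            intro j _
            have := Real.add_one_le_exp (-(c * β (N + j)))
            linarith
        _ = Real.exp (∑ j ∈ range k, -(c * β (N + j))) := (Real.exp_sum _ _).symm
        _ = Real.exp (-(c * ∑ j ∈ range k, β (N + j))) := by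
            congr 1
            rw [Finset.mul_sum, ← Finset.sum_neg_distrib]
    have hsum : Tendsto (fun k => ∑ j ∈ range k, β (N + j)) atTop atTop := by
      have h1 : Tendsto (fun k => ∑ j ∈ range (k + N), β j) atTop atTop :=
        hβdiv.comp (tendsto_add_atTop_nat N)
      have h2 : ∀ k, ∑ j ∈ range k, β (N + j)
          = (∑ j ∈ range (k + N), β j) + (-(∑ j ∈ range N, β j)) := by
        intro k
        rw [add_comm k N, Finset.sum_range_add]
        ring
      simp only [h2]
      exact tendsto_atTop_add_const_right _ _ h1
    have hexp : Tendsto (fun k => Real.exp (-(c * ∑ j ∈ range k, β (N + j))))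
        atTop (nhds 0) := by
      apply Real.tendsto_exp_atBot.comp
      exact tendsto_neg_atTop_atBot.comp (hsum.const_mul_atTop hc0)
    exact squeeze_zero (fun k => Finset.prod_nonneg fun j _ => (hfac _).le) hub hexp
  -- tails of |e| tend to zero
  have htail0 : Tendsto (fun N => ∑' k, |e (k + N)|) atTop (nhds 0) :=
    tendsto_sum_nat_add fun k => |e k|
  -- choose N with small tail
  obtain ⟨N, hN⟩ := Metric.tendsto_atTop.mp htail0 (c * ε / 3) (by positivity)
  have hNtail : ∀ n ≥ N, ∑' k, |e (k + n)| < c * ε / 3 := by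
    intro n hn
    have := hN n hn
    rw [Real.dist_eq, sub_zero] at this
    exact lt_of_le_of_lt (le_abs_self _) this
  -- choose k₀ with small product term
  have hvP : Tendsto (fun k => v N * ∏ j ∈ range k, (1 - c * β (N + j)))
      atTop (nhds 0) := by
    simpa using (hprod N).const_mul (v N)
  obtain ⟨k₀, hk₀⟩ := Metric.tendsto_atTop.mp hvP (c * ε / 3) (by positivity)
  have hk₀' : ∀ k ≥ k₀, v N * ∏ j ∈ range k, (1 - c * β (N + j)) < c * ε / 3 := by
    intro k hk
    have := hk₀ k hk
    rw [Real.dist_eq, sub_zero] at this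
    exact lt_of_le_of_lt (le_abs_self _) this
  refine ⟨N + k₀, fun k₁ hk₁ k₂ hk₂ => ?_⟩
  -- v k₁ is small
  have hNk₁ : N ≤ k₁ := le_trans (Nat.le_add_right N k₀) hk₁
  have hk₁eq : k₁ = N + (k₁ - N) := (Nat.add_sub_cancel' hNk₁).symm
  have hk₁k₀ : k₀ ≤ k₁ - N := by omega
  have hvk₁ : v k₁ ≤ 2 * (c * ε / 3) := by
    have h1 := hvN N (k₁ - N)
    rw [← hk₁eq] at h1
    have h2 := hk₀' (k₁ - N) hk₁k₀
    have h3 : ∑ j ∈ range (k₁ - N), |e (N + j)| ≤ ∑' k, |e (k + N)| := hrangeTail N _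
    have h4 := hNtail N le_rfl
    linarith
  -- total bound on c * ∑ β v
  have hkey := key k₁ k₂ hk₂
  have htailk₁ := hNtail k₁ hNk₁
  have hsumv : c * ∑ k ∈ Icc k₁ k₂, β k * v k ≤ c * ε := by
    calc c * ∑ k ∈ Icc k₁ k₂, β k * v k ≤ v k₁ + ∑' k, |e (k + k₁)| := hkey
      _ ≤ 2 * (c * ε / 3) + c * ε / 3 := add_le_add hvk₁ htailk₁.le
      _ = c * ε := by ring
  have hsumv' : ∑ k ∈ Icc k₁ k₂, β k * v k ≤ ε :=
    le_of_mul_le_mul_left hsumv hc0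
  -- compare ∑ β u with -∑ β v
  have hcmp : -∑ k ∈ Icc k₁ k₂, β k * v k ≤ ∑ k ∈ Icc k₁ k₂, β k * u k := by
    rw [← Finset.sum_neg_distrib]
    apply Finset.sum_le_sum
    intro k _
    have := mul_le_mul_of_nonneg_left (hvu k) (hβ k).1.le
    nlinarith [this]
  linarith
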